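/- Let K be a field of characteristic zero, let s ≥ 1 and r_1,…,r_s ≥ 1 be integers, and let R = K[x, y_{1,1},…,y_{1,r_1},…,y_{s,1},…,y_{s,r_s}]. Let D = ∂_x + Σ_{i=1}^{s} Σ_{j=1}^{r_i} (a_i(x)·y_{i,j} + b_{i,j}(x))·∂_{i,j} be the K-derivation of R determined by D(x) = 1 and D(y_{i,j}) = a_i(x)·y_{i,j} + b_{i,j}(x), where a_i, b_{i,j} ∈ K[x]. If D is a simple derivation, then deg a_i ≥ 1 (i.e., a_i is not a constant polynomial) for all 1 ≤ i ≤ s. -/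

import Mathlib

open MvPolynomial

/-- A `K`-subspace `M` of `R` is a Mathieu–Zhao space if for all `a, b ∈ R` such that
`a ^ m ∈ M` for all `m ≥ 1`, there exists `N` such that `b * a ^ m ∈ M` for all `m ≥ N`. -/
def IsMathieuZhao (K : Type*) {R : Type*} [Field K] [CommRing R] [Algebra K R]
    (M : Submodule K R) : Prop :=
  ∀ a b : R, (∀ m : ℕ, 1 ≤ m → a ^ m ∈ M) →
    ∃ N : ℕ, ∀ m : ℕ, N ≤ m → b * a ^ m ∈ M

/-- A `K`-derivation `D` of `R` is simple if the only ideals `I` of `R` with `D(I) ⊆ I`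
are `0` and `R`. -/
def Derivation.IsSimple {K R : Type*} [CommRing K] [CommRing R] [Algebra K R]
    (D : Derivation K R R) : Prop :=
  ∀ I : Ideal R, (∀ a ∈ I, D a ∈ I) → I = ⊥ ∨ I = ⊤

lemma exists_ode {K : Type*} [Field K] [CharZero K] (c : K) (b : Polynomial K) :
    ∃ p : Polynomial K, Polynomial.derivative p - Polynomial.C c * p = b := by
  suffices h : ∀ n (b : Polynomial K), b.natDegree ≤ n →
      ∃ p : Polynomial K, Polynomial.derivative p - Polynomial.C c * p = b by
    exact h b.natDegree b le_rfl
  intro n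
  induction n with
  | zero =>
    intro b hb
    obtain ⟨β, rfl⟩ := Polynomial.natDegree_eq_zero.mp (Nat.le_zero.mp hb)
    by_cases hc : c = 0
    · exact ⟨Polynomial.C β * Polynomial.X, by simp [hc]⟩
    · refine ⟨Polynomial.C (-β / c), ?_⟩
      rw [Polynomial.derivative_C]
      rw [← Polynomial.C_mul]
      rw [zero_sub, ← Polynomial.C_neg, Polynomial.C_inj]
      field_simp
  | succ n ih =>
    intro b hb
    obtain ⟨q, hq⟩ : ∃ q : Polynomial K,
        (b - (Polynomial.derivative q - Polynomial.C c * q)).natDegree ≤ n := by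
      by_cases hc : c = 0
      · refine ⟨Polynomial.C (b.coeff (n+1) / ((n : K)+2)) * Polynomial.X^(n+2), ?_⟩
        rw [Polynomial.natDegree_le_iff_coeff_eq_zero]
        intro m hm
        have h2 : ((n : K) + 2) ≠ 0 := by
          have : ((n+2 : ℕ) : K) ≠ 0 := Nat.cast_ne_zero.mpr (by omega)
          push_cast at this; exact this
        rcases eq_or_lt_of_le (Nat.succ_le_of_lt hm) with h | h
        · simp only [hc, map_zero, zero_mul, sub_zero, Polynomial.coeff_sub, Polynomial.coeff_derivative,
            Polynomial.coeff_C_mul, Polynomial.coeff_X_pow, ← h]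
          rw [if_pos trivial]
          push_cast
          field_simp
          ring
        · have hb' : b.coeff m = 0 := Polynomial.coeff_eq_zero_of_natDegree_lt (lt_of_le_of_lt hb h)
          simp only [hc, map_zero, zero_mul, sub_zero, Polynomial.coeff_sub, Polynomial.coeff_derivative,
            Polynomial.coeff_C_mul, Polynomial.coeff_X_pow, hb']
          rw [if_neg (by omega)]
          ring
      · refine ⟨Polynomial.C (-(b.coeff (n+1)) / c) * Polynomial.X^(n+1), ?_⟩
        rw [Polynomial.natDegree_le_iff_coeff_eq_zero]
        intro m hm
        rcases eq_or_lt_of_le (Nat.succ_le_of_lt hm) with h | h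
        · simp only [Polynomial.coeff_sub, Polynomial.coeff_derivative, Polynomial.coeff_C_mul, Polynomial.coeff_X_pow, ← h, mul_assoc]
          rw [if_neg (by omega), if_pos trivial]
          field_simp
          ring
        · have hb' : b.coeff m = 0 := Polynomial.coeff_eq_zero_of_natDegree_lt (lt_of_le_of_lt hb h)
          simp only [Polynomial.coeff_sub, Polynomial.coeff_derivative, Polynomial.coeff_C_mul, Polynomial.coeff_X_pow, hb', mul_assoc]
          rw [if_neg (by omega), if_neg (by omega)]
          ring
    obtain ⟨p, hp⟩ := ih _ hq
    exact ⟨p + q, by rw [Polynomial.derivative_add]; ring_nf; ring_nf at hp ⊢; linear_combination hp⟩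

/-- If the Shamsuddin derivation `D = ∂ₓ + Σᵢⱼ (aᵢ(x) yᵢⱼ + bᵢⱼ(x)) ∂ᵢⱼ`
is simple, then `deg aᵢ ≥ 1` for all `i`. -/
theorem statement0 (K : Type*) [Field K] [CharZero K]
    (s : ℕ) (hs : 1 ≤ s) (r : Fin s → ℕ) (hr : ∀ i, 1 ≤ r i)
    (a : Fin s → Polynomial K) (b : (i : Fin s) → Fin (r i) → Polynomial K)
    (D : Derivation K (MvPolynomial (Option (Σ i : Fin s, Fin (r i))) K)
      (MvPolynomial (Option (Σ i : Fin s, Fin (r i))) K))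
    (hDx : D (X none) = 1)
    (hDy : ∀ (i : Fin s) (j : Fin (r i)),
      D (X (some ⟨i, j⟩)) =
        Polynomial.aeval (X none) (a i) * X (some ⟨i, j⟩)
          + Polynomial.aeval (X none) (b i j))
    (hD : Derivation.IsSimple D) :
    ∀ i : Fin s, 1 ≤ (a i).natDegree := by
  intro i
  by_contra hlt
  have hdeg : (a i).natDegree = 0 := by omega
  obtain ⟨c, hc⟩ := Polynomial.natDegree_eq_zero.mp hdeg
  set j : Fin (r i) := ⟨0, hr i⟩ with hj
  obtain ⟨p, hp⟩ := exists_ode c (b i j)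
  set R := MvPolynomial (Option (Σ i : Fin s, Fin (r i))) K with hR
  set f : R := X (some ⟨i, j⟩) - Polynomial.aeval (X none) p with hf
  have key : Polynomial.derivative p = Polynomial.C c * p + b i j := by
    linear_combination hp
  have hDf : D f = MvPolynomial.C c * f := by
    rw [hf, map_sub, hDy i j, Derivation.comp_aeval_eq, hDx, key, ← hc]
    simp only [smul_eq_mul, mul_one, map_add, map_mul, Polynomial.aeval_C,
      MvPolynomial.algebraMap_eq]
    ring
  set I : Ideal R := Ideal.span {f} with hI
  have hstab : ∀ g ∈ I, D g ∈ I := by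
    intro g hg
    rw [hI, Ideal.mem_span_singleton] at hg ⊢
    obtain ⟨h, rfl⟩ := hg
    rw [Derivation.leibniz]
    simp only [smul_eq_mul]
    refine dvd_add ⟨D h, rfl⟩ ?_
    rw [hDf]
    exact ⟨MvPolynomial.C c * h, by ring⟩
  classical
  set φ : R →ₐ[K] Polynomial K :=
    MvPolynomial.aeval (fun v => if v = some ⟨i, j⟩ then Polynomial.X else 0) with hφ
  have hφf : φ f = Polynomial.X - Polynomial.C (p.coeff 0) := by
    have h1 : φ (X (some ⟨i, j⟩)) = Polynomial.X := by rw [hφ, MvPolynomial.aeval_X]; simp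
    have h2 : φ (Polynomial.aeval (X none) p) = Polynomial.C (p.coeff 0) := by
      rw [← Polynomial.aeval_algHom_apply]
      have h0 : φ (X none) = 0 := by rw [hφ, MvPolynomial.aeval_X]; simp
      rw [h0, Polynomial.aeval_def, Polynomial.eval₂_at_zero, Polynomial.algebraMap_eq]
    rw [hf, map_sub, h1, h2]
  rcases hD I hstab with hbot | htop
  · have : f = 0 := by
      have := Ideal.mem_span_singleton_self f
      rw [← hI, hbot] at this
      simpa using this
    have : φ f = 0 := by rw [this, map_zero]
    rw [hφf] at this
    exact Polynomial.X_sub_C_ne_zero (p.coeff 0) this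
  · have h1 : (1 : R) ∈ I := by rw [htop]; trivial
    rw [hI, Ideal.mem_span_singleton] at h1
    have : IsUnit f := isUnit_of_dvd_one h1
    have : IsUnit (φ f) := this.map φ
    rw [hφf] at this
    exact Polynomial.not_isUnit_X_sub_C (p.coeff 0) this
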